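/- If a connected graph G with Trémaux tree T admits an F-coloring, then it admits a strong F-coloring, i.e., an F-coloring in which for every vertex v the low set L(v) = {non-tree edges f ⪰ v with low(f) = low(v)} is monochromatic. -/

import Mathlib

variable {V : Type*}

/-- Tree order: `x ⪯ y` iff `x` lies on the unique `T`-path from the root `r` to `y`. -/
def tle (T : SimpleGraph V) (r x y : V) : Prop :=
  ∃ p : T.Walk r y, p.IsPath ∧ x ∈ p.support

/-- Strict tree order. -/
def stle (T : SimpleGraph V) (r x y : V) : Prop :=
  tle T r x y ∧ x ≠ y

/-- `T` is a Trémaux tree of `G` rooted at `r`. -/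
def IsTremaux (G T : SimpleGraph V) (r : V) : Prop :=
  T ≤ G ∧ T.IsTree ∧ ∀ x y, G.Adj x y → tle T r x y ∨ tle T r y x

/-- A back edge (non-tree edge), oriented downward: `a` is the upper endpoint, `b ≺ a`. -/
def BackEdge (G T : SimpleGraph V) (r a b : V) : Prop :=
  G.Adj a b ∧ ¬ T.Adj a b ∧ stle T r b a

/-- The set of which `low v` is the minimum: `v` together with all vertices joined
by a non-tree edge to a descendant of `v`. -/
def lowSet (G T : SimpleGraph V) (r v : V) : Set V :=
  {v} ∪ {u | ∃ w, tle T r v w ∧ G.Adj u w ∧ ¬ T.Adj u w}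

/-- `l` is the low point of the vertex `v`. -/
def IsLow (G T : SimpleGraph V) (r v l : V) : Prop :=
  l ∈ lowSet G T r v ∧ ∀ u ∈ lowSet G T r v, tle T r l u

/-- The edge from `v` to `w` is an edge going out of `v`: either a tree edge going up,
or a back edge going down. -/
def OutEdge (G T : SimpleGraph V) (r v w : V) : Prop :=
  (T.Adj v w ∧ stle T r v w) ∨ BackEdge G T r v w

/-- The back edge `(a,b)` lies above the edge `(v,w)` going out of `v`
(i.e. `f ⪰ e` in the order extended to edges). -/
def AboveE (T : SimpleGraph V) (r v w a b : V) : Prop :=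
  (T.Adj v w ∧ tle T r w a) ∨ (¬ T.Adj v w ∧ a = v ∧ b = w)

/-- Membership in the fringe of the edge `(v,w)` going out of `v`:
back edges `f = (a,b) ⪰ e` with `low f = b ≺ v`. -/
def InFringe (G T : SimpleGraph V) (r v w a b : V) : Prop :=
  BackEdge G T r a b ∧ AboveE T r v w a b ∧ stle T r b v

/-- The set of which `low e` is the minimum, for an edge `e = (v,w)` going out of `v`. -/
def lowESet (G T : SimpleGraph V) (r v w : V) : Set V :=
  {u | (T.Adj v w ∧ (u = v ∨ u ∈ lowSet G T r w)) ∨ (¬ T.Adj v w ∧ u = w)}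

/-- `l` is the low point of the edge `(v,w)` going out of `v`. -/
def IsLowE (G T : SimpleGraph V) (r v w l : V) : Prop :=
  l ∈ lowESet G T r v w ∧ ∀ u ∈ lowESet G T r v w, tle T r l u

/-- Membership in `Interlaced(e₁, e₂)` where `e₁ = (v,w₁)` and `l₂ = low e₂`:
back edges in the fringe of `e₁` whose low is strictly above `l₂`. -/
def InInterlaced (G T : SimpleGraph V) (r v w₁ l₂ a b : V) : Prop :=
  InFringe G T r v w₁ a b ∧ stle T r l₂ b

/-- `c` is an F-coloring of the back edges of `(G,T)` by `{-1,+1}`. -/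
def FColoring (G T : SimpleGraph V) (r : V) (c : V → V → ℤ) : Prop :=
  (∀ a b, BackEdge G T r a b → c a b = 1 ∨ c a b = -1) ∧
  ∀ v w₁ w₂ l₁ l₂, OutEdge G T r v w₁ → OutEdge G T r v w₂ → w₁ ≠ w₂ →
    IsLowE G T r v w₁ l₁ → IsLowE G T r v w₂ l₂ →
    (∀ a b a' b', InInterlaced G T r v w₁ l₂ a b →
        InInterlaced G T r v w₁ l₂ a' b' → c a b = c a' b') ∧
    (∀ a b a' b', InInterlaced G T r v w₂ l₁ a b →
        InInterlaced G T r v w₂ l₁ a' b' → c a b = c a' b') ∧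
    (∀ a b a' b', InInterlaced G T r v w₁ l₂ a b →
        InInterlaced G T r v w₂ l₁ a' b' → c a b ≠ c a' b')

/-- A strong F-coloring additionally makes each low set `L(v)` monochromatic. -/
def StrongAtLows (G T : SimpleGraph V) (r : V) (c : V → V → ℤ) : Prop :=
  ∀ v l, IsLow G T r v l →
    ∀ a b a' b', BackEdge G T r a b → tle T r v a → b = l →
      BackEdge G T r a' b' → tle T r v a' → b' = l → c a b = c a' b'

/-- `H` is a minor of `G` (branch-set formulation). -/
def IsMinorOf {W V : Type*} (H : SimpleGraph W) (G : SimpleGraph V) : Prop :=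
  ∃ ρ : V → Option W,
    (∀ w, ∃ v, ρ v = some w) ∧
    (∀ w, (G.induce {v | ρ v = some w}).Connected) ∧
    (∀ w₁ w₂, H.Adj w₁ w₂ → ∃ v₁ v₂, ρ v₁ = some w₁ ∧ ρ v₂ = some w₂ ∧ G.Adj v₁ v₂)

/-- Planarity (Kuratowski–Wagner characterization): no `K₅` and no `K₃,₃` minor. -/
def Planar (G : SimpleGraph V) : Prop :=
  ¬ IsMinorOf (SimpleGraph.completeGraph (Fin 5)) G ∧
  ¬ IsMinorOf (completeBipartiteGraph (Fin 3) (Fin 3)) G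

section Aux

open SimpleGraph

variable {G T : SimpleGraph V} {r : V}

/-- Uniqueness of paths in a tree. -/
lemma uniq_path (hT : T.IsTree) {x y : V} (p q : T.Walk x y) (hp : p.IsPath) (hq : q.IsPath) :
    p = q := by
  obtain ⟨u, -, hu⟩ := hT.existsUnique_path x y
  rw [hu p hp, hu q hq]

lemma tle_refl (hT : T.IsTree) (y : V) : tle T r y y := by
  obtain ⟨p, hp⟩ := (hT.existsUnique_path r y).exists
  exact ⟨p, hp, p.end_mem_support⟩

lemma tle_trans (hT : T.IsTree) {x y z : V} (hxy : tle T r x y) (hyz : tle T r y z) :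
    tle T r x z := by
  classical
  obtain ⟨p, hp, hx⟩ := hxy
  obtain ⟨q, hq, hy⟩ := hyz
  have h1 : q.takeUntil y hy = p := uniq_path hT _ _ (hq.takeUntil hy) hp
  refine ⟨q, hq, q.support_takeUntil_subset hy ?_⟩
  rw [h1]; exact hx

lemma tle_antisymm (hT : T.IsTree) {x y : V} (hxy : tle T r x y) (hyx : tle T r y x) :
    x = y := by
  classical
  obtain ⟨p, hp, hx⟩ := hxy
  obtain ⟨q, hq, hy⟩ := hyx
  have e1 : p.takeUntil x hx = q := uniq_path hT _ _ (hp.takeUntil hx) hq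
  have l1 : q.length ≤ p.length := by rw [← e1]; exact p.length_takeUntil_le hx
  have e2 : q.takeUntil y hy = p := uniq_path hT _ _ (hq.takeUntil hy) hp
  have l2 : p.length ≤ q.length := by rw [← e2]; exact q.length_takeUntil_le hy
  have hsplit := p.take_spec hx
  have hlen : (p.takeUntil x hx).length + (p.dropUntil x hx).length = p.length := by
    rw [← SimpleGraph.Walk.length_append, hsplit]
  have lt : (p.takeUntil x hx).length = q.length := by rw [e1]
  have : (p.dropUntil x hx).length = 0 := by omega
  exact SimpleGraph.Walk.eq_of_length_eq_zero this

/-- Any two ancestors of a common vertex are comparable. -/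
lemma tle_comparable (hT : T.IsTree) {x x' a : V} (h1 : tle T r x a) (h2 : tle T r x' a) :
    tle T r x x' ∨ tle T r x' x := by
  classical
  obtain ⟨p, hp, hx⟩ := h1
  obtain ⟨p', hp', hx'⟩ := h2
  have hpp : p' = p := uniq_path hT _ _ hp' hp
  subst hpp
  obtain ⟨q, s, rfl⟩ := SimpleGraph.Walk.mem_support_iff_exists_append.mp hx'
  rcases (SimpleGraph.Walk.mem_support_append_iff q s).mp hx with hxq | hxs
  · exact Or.inl ⟨q, hp.of_append_left, hxq⟩
  · right
    have hqp : q.IsPath := hp.of_append_left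
    have hsp : s.IsPath := hp.of_append_right
    have htp : (s.takeUntil x hxs).IsPath := hsp.takeUntil hxs
    have htsub : (s.takeUntil x hxs).support ⊆ s.support := s.support_takeUntil_subset hxs
    have hpnodup := hp.support_nodup
    rw [SimpleGraph.Walk.support_append, List.nodup_append] at hpnodup
    have htn := htp.support_nodup
    rw [SimpleGraph.Walk.support_eq_cons] at htn
    obtain ⟨hx'nt, htail⟩ := List.nodup_cons.mp htn
    refine ⟨q.append (s.takeUntil x hxs), ?_, ?_⟩
    · rw [SimpleGraph.Walk.isPath_def, SimpleGraph.Walk.support_append, List.nodup_append]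
      refine ⟨hqp.support_nodup, htail, ?_⟩
      intro z hzq z' hzt hzz'
      subst hzz'
      have hz1 : z ∈ (s.takeUntil x hxs).support := by
        rw [SimpleGraph.Walk.support_eq_cons]; exact List.mem_cons_of_mem _ hzt
      have hzx' : z ≠ x' := fun h => hx'nt (h ▸ hzt)
      have hzs : z ∈ s.support := htsub hz1
      have hzst : z ∈ s.support.tail := by
        rw [SimpleGraph.Walk.support_eq_cons] at hzs
        rcases List.mem_cons.mp hzs with h | h
        · exact absurd h hzx'
        · exact h
      exact hpnodup.2.2 z hzq z hzst rfl
    · rw [SimpleGraph.Walk.mem_support_append_iff]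
      exact Or.inr (SimpleGraph.Walk.start_mem_support _)

/-- For a tree edge `v—w` going up, any `m ⪯ w` satisfies `m ⪯ v` or `m = w`. -/
lemma tle_adj_cases (hT : T.IsTree) {v w m : V} (hadj : T.Adj v w) (hvw : stle T r v w)
    (hm : tle T r m w) : tle T r m v ∨ m = w := by
  classical
  obtain ⟨p, hp⟩ := (hT.existsUnique_path r v).exists
  have hwns : w ∉ p.support := by
    intro hw
    exact hvw.2 (tle_antisymm hT hvw.1 ⟨p, hp, hw⟩)
  have hq : (p.concat hadj).IsPath := by
    rw [SimpleGraph.Walk.isPath_def, SimpleGraph.Walk.support_concat,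
      List.nodup_append]
    refine ⟨hp.support_nodup, List.nodup_singleton w, ?_⟩
    intro z hz z' hz' hzz'
    rw [List.mem_singleton] at hz'
    subst hz'
    subst hzz'
    exact hwns hz
  obtain ⟨q, hq', hmq⟩ := hm
  have hqe : q = p.concat hadj := uniq_path hT _ _ hq' hq
  rw [hqe, SimpleGraph.Walk.support_concat, List.mem_append] at hmq
  rcases hmq with h | h
  · exact Or.inl ⟨p, hp, h⟩
  · exact Or.inr (List.mem_singleton.mp h)

lemma mem_lowSet {u v : V} :
    u ∈ lowSet G T r v ↔ u = v ∨ ∃ w, tle T r v w ∧ G.Adj u w ∧ ¬ T.Adj u w := by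
  simp [lowSet, Set.mem_union, Set.mem_setOf_eq]

lemma mem_lowESet {u v w : V} :
    u ∈ lowESet G T r v w ↔
      (T.Adj v w ∧ (u = v ∨ u ∈ lowSet G T r w)) ∨ (¬ T.Adj v w ∧ u = w) := Iff.rfl

lemma isLow_le_self (h : IsLow G T r v l) : tle T r l v :=
  h.2 v (mem_lowSet.mpr (Or.inl rfl))

/-- No vertex `m ⪯ v` can have low point `b` when some sibling low `l₂` at `v`
satisfies `l₂ ≺ b ≺ v`. -/
lemma no_low_below (hT : T.IsTree) {v w₂ l₂ b m : V}
    (ho : OutEdge G T r v w₂) (hl2 : IsLowE G T r v w₂ l₂)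
    (h1 : stle T r l₂ b) (h2 : stle T r b v) (hm : IsLow G T r m b) (hmv : tle T r m v) :
    False := by
  have hbl2 : tle T r b l₂ → False := fun h => h1.2 (tle_antisymm hT h1.1 h)
  rcases hl2.1 with ⟨hadj, hcase⟩ | ⟨hnadj, rfl⟩
  · -- tree-edge case for `e₂`
    have hst : stle T r v w₂ := by
      rcases ho with ⟨_, hst⟩ | hbe
      · exact hst
      · exact absurd hadj hbe.2.1
    rcases hcase with rfl | hmem
    · -- l₂ = v
      exact h2.2 (tle_antisymm hT h2.1 h1.1)
    · rcases mem_lowSet.mp hmem with rfl | ⟨w, hww, hadj', hnadj'⟩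
      · -- l₂ = w₂ ⪰ v, but l₂ ≺ b ≺ v
        have hvl2 : tle T r v l₂ := hst.1
        have hl2v : tle T r l₂ v := tle_trans hT h1.1 h2.1
        have hvel2 : v = l₂ := tle_antisymm hT hvl2 hl2v
        exact h2.2 (tle_antisymm hT h2.1 (hvel2 ▸ h1.1))
      · -- l₂ is a back-edge endpoint below a descendant of w₂
        have hmw : tle T r m w := tle_trans hT (tle_trans hT hmv hst.1) hww
        exact hbl2 (hm.2 l₂ (mem_lowSet.mpr (Or.inr ⟨w, hmw, hadj', hnadj'⟩)))
  · -- back-edge case for `e₂`: l₂ = w₂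
    rcases ho with ⟨hadj, _⟩ | ⟨hG, hnT, _⟩
    · exact absurd hadj hnadj
    · exact hbl2 (hm.2 _ (mem_lowSet.mpr
        (Or.inr ⟨v, hmv, hG.symm, fun h => hnT h.symm⟩)))

lemma chain_min (hT : T.IsTree) {a : V} (s : Finset V) (hs : s.Nonempty)
    (hsub : ∀ x ∈ s, tle T r x a) :
    ∃ m ∈ s, ∀ u ∈ s, tle T r m u := by
  classical
  induction s using Finset.induction_on with
  | empty => exact absurd hs (by simp)
  | @insert x t hx ih =>
    by_cases ht : t.Nonempty
    · obtain ⟨m, hms, hmin⟩ := ih ht (fun y hy => hsub y (Finset.mem_insert_of_mem hy))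
      have hxa : tle T r x a := hsub x (Finset.mem_insert_self x t)
      have hma : tle T r m a := hsub m (Finset.mem_insert_of_mem hms)
      rcases tle_comparable hT hxa hma with hxm | hmx
      · refine ⟨x, Finset.mem_insert_self x t, ?_⟩
        intro u hu
        rcases Finset.mem_insert.mp hu with rfl | hu
        · exact tle_refl hT u
        · exact tle_trans hT hxm (hmin u hu)
      · refine ⟨m, Finset.mem_insert_of_mem hms, ?_⟩
        intro u hu
        rcases Finset.mem_insert.mp hu with rfl | hu
        · exact hmx
        · exact hmin u hu
    · have hte : t = ∅ := Finset.not_nonempty_iff_eq_empty.mp ht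
      subst hte
      refine ⟨x, Finset.mem_insert_self x ∅, ?_⟩
      intro u hu
      rcases Finset.mem_insert.mp hu with rfl | hu
      · exact tle_refl hT u
      · exact absurd hu (by simp)

lemma exists_min [Fintype V] (hT : T.IsTree) {a b : V}
    (hne : ∃ u, tle T r u a ∧ IsLow G T r u b) :
    ∃ m, (tle T r m a ∧ IsLow G T r m b) ∧
      ∀ u, tle T r u a → IsLow G T r u b → tle T r m u := by
  classical
  set s : Finset V := Finset.univ.filter (fun u => tle T r u a ∧ IsLow G T r u b) with hs
  have hmem : ∀ u, u ∈ s ↔ tle T r u a ∧ IsLow G T r u b := by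
    intro u; simp [hs]
  obtain ⟨u₀, hu₀⟩ := hne
  obtain ⟨m, hms, hmin⟩ := chain_min hT s ⟨u₀, (hmem u₀).mpr hu₀⟩
    (fun x hxs => ((hmem x).mp hxs).1)
  exact ⟨m, (hmem m).mp hms, fun u h1 h2 => hmin u ((hmem u).mpr ⟨h1, h2⟩)⟩

end Aux

open Classical in
/-- A canonical back edge into `b` from above `m`. -/
noncomputable def pickA (G T : SimpleGraph V) (r m b : V) : V :=
  if h : ∃ a', BackEdge G T r a' b ∧ tle T r m a' then h.choose else m

lemma pickA_spec {G T : SimpleGraph V} {r m b : V}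
    (h : ∃ a', BackEdge G T r a' b ∧ tle T r m a') :
    BackEdge G T r (pickA G T r m b) b ∧ tle T r m (pickA G T r m b) := by
  rw [pickA, dif_pos h]
  exact h.choose_spec

open Classical in
/-- The recoloring: recolor each back edge `(a,b)` to the color of the canonical
representative of `L(m)`, where `m` is the least `u ⪯ a` with low point `b`. -/
noncomputable def fixC (G T : SimpleGraph V) (r : V) (c : V → V → ℤ) (a b : V) : ℤ :=
  if h : ∃ m, (tle T r m a ∧ IsLow G T r m b) ∧
      ∀ u, tle T r u a → IsLow G T r u b → tle T r m u
  then c (pickA G T r h.choose b) b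
  else c a b

/-- Edges appearing in any interlaced set keep their color under `fixC`. -/
lemma key_eq [Fintype V] {G T : SimpleGraph V} {r : V} (hT : T.IsTree) {c : V → V → ℤ}
    (hc : FColoring G T r c) {v w₁ w₂ l₁ l₂ a b : V}
    (ho1 : OutEdge G T r v w₁) (ho2 : OutEdge G T r v w₂) (hw : w₁ ≠ w₂)
    (hl1 : IsLowE G T r v w₁ l₁) (hl2 : IsLowE G T r v w₂ l₂)
    (hf : InInterlaced G T r v w₁ l₂ a b) :
    fixC G T r c a b = c a b := by
  classical
  unfold fixC
  split_ifs with h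
  · obtain ⟨⟨hma, hmlow⟩, -⟩ := h.choose_spec
    obtain ⟨⟨hbe, habove, hbv⟩, hl2b⟩ := id hf
    have hnotmv : ¬ tle T r h.choose v :=
      fun hmv => no_low_below hT ho2 hl2 hl2b hbv hmlow hmv
    rcases ho1 with ⟨hadj, hst⟩ | hbe1
    · -- tree-edge case
      rcases habove with ⟨-, hw1a⟩ | ⟨hnadj, -, -⟩
      · have hva : tle T r v a := tle_trans hT hst.1 hw1a
        have hw1m : tle T r w₁ h.choose := by
          rcases tle_comparable hT hma hw1a with hmw1 | hw1m
          · rcases tle_adj_cases hT hadj hst hmw1 with hmv | rfl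
            · exact absurd hmv hnotmv
            · exact tle_refl hT _
          · exact hw1m
        have hg : ∃ a', BackEdge G T r a' b ∧ tle T r h.choose a' := ⟨a, hbe, hma⟩
        obtain ⟨hgbe, hmg⟩ := pickA_spec hg
        have hgint : InInterlaced G T r v w₁ l₂ (pickA G T r h.choose b) b :=
          ⟨⟨hgbe, Or.inl ⟨hadj, tle_trans hT hw1m hmg⟩, hbv⟩, hl2b⟩
        exact ((hc.2 v w₁ w₂ l₁ l₂ (Or.inl ⟨hadj, hst⟩) ho2 hw hl1 hl2).1 a b _ b hf hgint).symm
      · exact absurd hadj hnadj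
    · -- back-edge case: then `a = v`, impossible since `m ⪯ a` and `¬ m ⪯ v`
      rcases habove with ⟨hadj, -⟩ | ⟨-, rfl, rfl⟩
      · exact absurd hadj hbe1.2.1
      · exact absurd hma hnotmv
  · rfl

/-- if `G` admits an F-coloring then it admits a strong F-coloring. -/
theorem stmt11 [Fintype V] (G T : SimpleGraph V) (r : V)
    (h : IsTremaux G T r) (hc : ∃ c, FColoring G T r c) :
    ∃ c, FColoring G T r c ∧ StrongAtLows G T r c := by
  classical
  obtain ⟨c, hc⟩ := hc
  obtain ⟨-, hT, -⟩ := h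
  refine ⟨fixC G T r c, ⟨?_, ?_⟩, ?_⟩
  · -- colors are in {±1}
    intro a b hbe
    unfold fixC
    split_ifs with hm
    · have hg : ∃ a', BackEdge G T r a' b ∧ tle T r hm.choose a' :=
        ⟨a, hbe, hm.choose_spec.1.1⟩
      exact hc.1 _ _ (pickA_spec hg).1
    · exact hc.1 a b hbe
  · -- F-coloring constraints
    intro v w₁ w₂ l₁ l₂ ho1 ho2 hw hl1 hl2
    have H := hc.2 v w₁ w₂ l₁ l₂ ho1 ho2 hw hl1 hl2
    refine ⟨?_, ?_, ?_⟩
    · intro a b a' b' h1 h2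
      rw [key_eq hT hc ho1 ho2 hw hl1 hl2 h1, key_eq hT hc ho1 ho2 hw hl1 hl2 h2]
      exact H.1 a b a' b' h1 h2
    · intro a b a' b' h1 h2
      rw [key_eq hT hc ho2 ho1 hw.symm hl2 hl1 h1, key_eq hT hc ho2 ho1 hw.symm hl2 hl1 h2]
      exact H.2.1 a b a' b' h1 h2
    · intro a b a' b' h1 h2
      rw [key_eq hT hc ho1 ho2 hw hl1 hl2 h1, key_eq hT hc ho2 ho1 hw.symm hl2 hl1 h2]
      exact H.2.2 a b a' b' h1 h2
  · -- strong at lows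
    intro v l hlow a b a' b' hbe hva hb hbe' hva' hb'
    subst hb; subst hb'
    have h1 : ∃ m, (tle T r m a ∧ IsLow G T r m b') ∧
        ∀ u, tle T r u a → IsLow G T r u b' → tle T r m u :=
      exists_min hT ⟨v, hva, hlow⟩
    have h2 : ∃ m, (tle T r m a' ∧ IsLow G T r m b') ∧
        ∀ u, tle T r u a' → IsLow G T r u b' → tle T r m u :=
      exists_min hT ⟨v, hva', hlow⟩
    unfold fixC
    rw [dif_pos h1, dif_pos h2]
    have hmeq : h1.choose = h2.choose := by
      obtain ⟨⟨h1a, h1low⟩, h1min⟩ := h1.choose_spec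
      obtain ⟨⟨h2a, h2low⟩, h2min⟩ := h2.choose_spec
      have h1v : tle T r h1.choose v := h1min v hva hlow
      have h2v : tle T r h2.choose v := h2min v hva' hlow
      exact tle_antisymm hT
        (h1min h2.choose (tle_trans hT h2v hva) h2low)
        (h2min h1.choose (tle_trans hT h1v hva') h1low)
    rw [hmeq]
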